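/- Let 0 ≤ l < k ≤ n and let λ = (λ_1, …, λ_n) ∈ Γ_k with λ_1 ≥ λ_2 ≥ ⋯ ≥ λ_n. Then λ_1, …, λ_l are all positive and σ_{k−1}(λ) ≥ λ_1⋯λ_l · σ_{k−l−1}(λ|1, …, l), where for l = 0 the empty product equals 1. (A step used in display (2.13) in the proof of Lemma 2.6.) -/

import Mathlib

open Finset

noncomputable def esymm {n : ℕ} (lam : Fin n → ℝ) (m : ℤ) : ℝ :=
  if m < 0 then 0
  else ∑ s ∈ Finset.powersetCard m.toNat Finset.univ, ∏ i ∈ s, lam i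

noncomputable def esymmDel {n : ℕ} (lam : Fin n → ℝ) (i : Fin n) (m : ℤ) : ℝ :=
  if m < 0 then 0
  else ∑ s ∈ Finset.powersetCard m.toNat (Finset.univ.erase i), ∏ j ∈ s, lam j

noncomputable def esymmDelSet {n : ℕ} (lam : Fin n → ℝ) (S : Finset (Fin n)) (m : ℤ) : ℝ :=
  if m < 0 then 0
  else ∑ s ∈ Finset.powersetCard m.toNat (Finset.univ \ S), ∏ j ∈ s, lam j

def GardingCone (n k : ℕ) : Set (Fin n → ℝ) :=
  {lam | ∀ m : ℕ, 1 ≤ m → m ≤ k → 0 < esymm lam (m : ℤ)}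

noncomputable def sigmaMat {n : ℕ} (A : Matrix (Fin n) (Fin n) ℝ) (m : ℤ) : ℝ :=
  if m < 0 then 0
  else ∑ s ∈ Finset.powersetCard m.toNat (Finset.univ : Finset (Fin n)),
    (A.submatrix (fun i : {x : Fin n // x ∈ s} => (i : Fin n))
                 (fun j : {x : Fin n // x ∈ s} => (j : Fin n))).det

open Polynomial

private lemma eval_prod_XsubC_pos (s : Multiset ℝ) (t : ℝ) (h : ∀ r ∈ s, r < t) :
    0 < ((s.map fun r => X - C r).prod).eval t := by
  induction s using Multiset.induction_on with
  | empty => simp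
  | cons r s ih =>
    simp only [Multiset.map_cons, Multiset.prod_cons, eval_mul, eval_sub, eval_X, eval_C]
    exact mul_pos (sub_pos.2 (h r (Multiset.mem_cons_self r s)))
      (ih fun x hx => h x (Multiset.mem_cons_of_mem hx))

private lemma eval_deriv_prod_XsubC (s : Multiset ℝ) (t : ℝ) (h : ∀ r ∈ s, r < t) :
    0 ≤ (derivative (s.map fun r => X - C r).prod).eval t ∧
      (s ≠ 0 → 0 < (derivative (s.map fun r => X - C r).prod).eval t) := by
  induction s using Multiset.induction_on with
  | empty => simp
  | cons r s ih =>
    have h' : ∀ x ∈ s, x < t := fun x hx => h x (Multiset.mem_cons_of_mem hx)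
    have hW := eval_prod_XsubC_pos s t h'
    have hr := sub_pos.2 (h r (Multiset.mem_cons_self r s))
    have hd := (ih h').1
    simp only [Multiset.map_cons, Multiset.prod_cons, derivative_mul, derivative_sub,
      derivative_X, derivative_C, sub_zero, one_mul, eval_add, eval_mul, eval_sub,
      eval_X, eval_C]
    constructor
    · nlinarith
    · intro _; nlinarith

private lemma coeff_prod_XsubC (s : Multiset ℝ) (h : ∀ r ∈ s, r < 0) : ∀ j : ℕ,
    (j ≤ Multiset.card s → 0 < ((s.map fun r => X - C r).prod).coeff j) ∧
      (Multiset.card s < j → ((s.map fun r => X - C r).prod).coeff j = 0) := by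
  induction s using Multiset.induction_on with
  | empty =>
    intro j
    constructor
    · intro hj
      simp only [Multiset.card_zero, Nat.le_zero] at hj
      simp [hj]
    · intro hj
      simp only [Multiset.map_zero, Multiset.prod_zero]
      rw [coeff_one, if_neg (by omega)]
  | cons r s ih =>
    intro j
    have hr : r < 0 := h r (Multiset.mem_cons_self r s)
    have h' : ∀ x ∈ s, x < 0 := fun x hx => h x (Multiset.mem_cons_of_mem hx)
    have key : ((r ::ₘ s).map fun a => X - C a).prod
        = X * (s.map fun a => X - C a).prod - C r * (s.map fun a => X - C a).prod := by
      rw [Multiset.map_cons, Multiset.prod_cons]; ring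
    rw [key]
    set W := (s.map fun a => X - C a).prod with hW
    constructor
    · intro hj
      rcases j with _ | i
      · have h0 : (X * W - C r * W).coeff 0 = -r * W.coeff 0 := by
          simp [coeff_sub, mul_coeff_zero, coeff_X_zero, coeff_C_mul]; try ring
        rw [h0]
        exact mul_pos (by linarith) ((ih h' 0).1 (Nat.zero_le _))
      · have h0 : (X * W - C r * W).coeff (i + 1) = W.coeff i + (-r) * W.coeff (i + 1) := by
          simp [coeff_sub, coeff_X_mul, coeff_C_mul]; try ring
        rw [h0]
        simp only [Multiset.card_cons] at hj
        have h1 : 0 < W.coeff i := (ih h' i).1 (by omega)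
        rcases le_or_gt (i + 1) (Multiset.card s) with hc | hc
        · have := (ih h' (i + 1)).1 hc
          nlinarith
        · rw [(ih h' (i + 1)).2 hc]; linarith
    · intro hj
      simp only [Multiset.card_cons] at hj
      rcases j with _ | i
      · omega
      · have h0 : (X * W - C r * W).coeff (i + 1) = W.coeff i + (-r) * W.coeff (i + 1) := by
          simp [coeff_sub, coeff_X_mul, coeff_C_mul]; try ring
        rw [h0, (ih h' i).2 (by omega), (ih h' (i + 1)).2 (by omega)]
        ring

private def RSplit (g : Polynomial ℝ) : Prop := Multiset.card g.roots = g.natDegree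

private lemma rsplit_derivative {g : Polynomial ℝ} (h : RSplit g) : RSplit (derivative g) := by
  have h1 := Polynomial.card_roots_le_derivative g
  have h2 := Polynomial.natDegree_derivative_le g
  have h3 := Polynomial.card_roots' (derivative g)
  unfold RSplit at *
  omega

private lemma rsplit_iterate {g : Polynomial ℝ} (h : RSplit g) (s : ℕ) :
    RSplit (derivative^[s] g) := by
  induction s with
  | zero => exact h
  | succ t ih => rw [Function.iterate_succ_apply']; exact rsplit_derivative ih

private lemma natDegree_iterate_le (g : Polynomial ℝ) (s : ℕ) :
    (derivative^[s] g).natDegree ≤ g.natDegree - s := by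
  induction s with
  | zero => simp
  | succ t ih =>
    rw [Function.iterate_succ_apply']
    have := Polynomial.natDegree_derivative_le (derivative^[t] g)
    omega

private lemma evals_of_split (g : Polynomial ℝ) (hs : RSplit g) (h0 : 0 < g.leadingCoeff)
    (t : ℝ) (ht : ∀ r ∈ g.roots, r < t) :
    0 < g.eval t ∧ (g.roots ≠ 0 → 0 < (derivative g).eval t) := by
  have hfac := Polynomial.C_leadingCoeff_mul_prod_multiset_X_sub_C hs
  constructor
  · conv_rhs => rw [← hfac]
    rw [eval_mul, eval_C]
    exact mul_pos h0 (eval_prod_XsubC_pos _ _ ht)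
  · intro hne
    have : derivative g = C g.leadingCoeff * derivative (g.roots.map fun a => X - C a).prod := by
      conv_lhs => rw [← hfac]
      rw [derivative_C_mul]
    rw [this, eval_mul, eval_C]
    exact mul_pos h0 ((eval_deriv_prod_XsubC _ _ ht).2 hne)

private lemma coeff_pos_of_split_neg_roots (g : Polynomial ℝ) (hs : RSplit g)
    (h0 : 0 < g.leadingCoeff) (hneg : ∀ r ∈ g.roots, r < 0) :
    ∀ j, j ≤ g.natDegree → 0 < g.coeff j := by
  intro j hj
  have hfac := Polynomial.C_leadingCoeff_mul_prod_multiset_X_sub_C hs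
  conv_rhs => rw [← hfac]
  rw [coeff_C_mul]
  exact mul_pos h0 ((coeff_prod_XsubC g.roots hneg j).1 (by unfold RSplit at hs; omega))

private lemma iterate_deriv_linear_mul (c : ℝ) (q : Polynomial ℝ) : ∀ m : ℕ,
    derivative^[m + 1] ((X + C c) * q) =
      (X + C c) * derivative^[m + 1] q + C ((m : ℝ) + 1) * derivative^[m] q := by
  intro m
  induction m with
  | zero =>
    simp only [Function.iterate_one, Function.iterate_zero, id_eq, Nat.cast_zero, zero_add, C_1]
    rw [derivative_mul, derivative_add, derivative_X, derivative_C]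
    ring
  | succ t ih =>
    have h1 : derivative^[t + 1 + 1] ((X + C c) * q)
        = derivative (derivative^[t + 1] ((X + C c) * q)) := Function.iterate_succ_apply' _ _ _
    rw [h1, ih, derivative_add, derivative_mul, derivative_mul, derivative_add, derivative_X,
      derivative_C, derivative_C]
    have h2 : derivative (derivative^[t + 1] q) = derivative^[t + 1 + 1] q :=
      (Function.iterate_succ_apply' _ _ _).symm
    have h3 : derivative (derivative^[t] q) = derivative^[t + 1] q :=
      (Function.iterate_succ_apply' _ _ _).symm
    rw [h2, h3]
    push_cast
    simp only [C_add, C_1]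
    ring

private def sigmaT {n : ℕ} (lam : Fin n → ℝ) (T : Finset (Fin n)) (j : ℕ) : ℝ :=
  ∑ s ∈ Finset.powersetCard j T, ∏ i ∈ s, lam i

private lemma sigmaT_zero {n : ℕ} (lam : Fin n → ℝ) (T : Finset (Fin n)) :
    sigmaT lam T 0 = 1 := by
  simp [sigmaT, Finset.powersetCard_zero]

private lemma coeff_prodT {n : ℕ} (lam : Fin n → ℝ) (T : Finset (Fin n)) (j : ℕ)
    (hj : j ≤ T.card) :
    (∏ i ∈ T, (X + C (lam i))).coeff (T.card - j) = sigmaT lam T j := by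
  rw [Finset.prod_X_add_C_coeff _ _ (Nat.sub_le _ _), show T.card - (T.card - j) = j by omega]
  rfl

private lemma prodT_monic {n : ℕ} (lam : Fin n → ℝ) (T : Finset (Fin n)) :
    (∏ i ∈ T, (X + C (lam i))).Monic :=
  monic_prod_of_monic _ _ fun i _ => monic_X_add_C _

private lemma prodT_natDegree {n : ℕ} (lam : Fin n → ℝ) (T : Finset (Fin n)) :
    (∏ i ∈ T, (X + C (lam i))).natDegree = T.card := by
  rw [natDegree_prod _ _ fun i _ => X_add_C_ne_zero (lam i)]
  simp [natDegree_X_add_C]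

private lemma prodT_roots {n : ℕ} (lam : Fin n → ℝ) (T : Finset (Fin n)) :
    (∏ i ∈ T, (X + C (lam i))).roots = T.val.map fun i => -lam i := by
  have h : ∏ i ∈ T, (X + C (lam i))
      = ((T.val.map fun i => -lam i).map fun r => X - C r).prod := by
    rw [Multiset.map_map, Finset.prod_eq_multiset_prod]
    congr 1
    apply Multiset.map_congr rfl
    intro x _
    simp [sub_neg_eq_add]
  rw [h, roots_multiset_prod_X_sub_C]

private lemma prodT_rsplit {n : ℕ} (lam : Fin n → ℝ) (T : Finset (Fin n)) :
    RSplit (∏ i ∈ T, (X + C (lam i))) := by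
  unfold RSplit
  rw [prodT_roots, prodT_natDegree, Multiset.card_map]
  rfl

private lemma delete_max {n : ℕ} (lam : Fin n → ℝ) (T : Finset (Fin n)) (a : Fin n)
    (ha : a ∈ T) (κ : ℕ) (hκ1 : 1 ≤ κ) (hκT : κ ≤ T.card)
    (hpos : ∀ j, 1 ≤ j → j ≤ κ → 0 < sigmaT lam T j) :
    ∀ j, j ≤ κ - 1 → 0 < sigmaT lam (T.erase a) j := by
  intro j hj
  rcases Nat.eq_zero_or_pos j with rfl | hj1
  · rw [sigmaT_zero]; norm_num
  have hκ2 : 2 ≤ κ := by omega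
  set E := T.erase a with hE
  set d : ℕ := T.card - 1 with hd
  have hTcard : 1 ≤ T.card := by omega
  have hEcard : E.card = d := by rw [hE, Finset.card_erase_of_mem ha]
  set q : Polynomial ℝ := ∏ i ∈ E, (X + C (lam i)) with hq
  set p : Polynomial ℝ := ∏ i ∈ T, (X + C (lam i)) with hp
  have hpq : p = (X + C (lam a)) * q := (Finset.mul_prod_erase T _ ha).symm
  obtain ⟨m, hm⟩ : ∃ m : ℕ, m = T.card - κ := ⟨_, rfl⟩
  have hmd : m ≤ d - 1 := by omega
  have hqdeg : q.natDegree = d := by rw [hq, prodT_natDegree, hEcard]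
  have hqsplit := prodT_rsplit lam E
  have hpdeg : p.natDegree = T.card := prodT_natDegree lam T
  -- coefficients of p at indices ≥ m are nonneg, positive up to T.card
  have hpc_pos : ∀ i, m ≤ i → i ≤ T.card → 0 < p.coeff i := by
    intro i h1 h2
    have h3 : T.card - (T.card - i) = i := by omega
    have := coeff_prodT lam T (T.card - i) (Nat.sub_le _ _)
    rw [h3] at this
    rw [this]
    rcases Nat.eq_zero_or_pos (T.card - i) with h4 | h4
    · rw [h4, sigmaT_zero]; norm_num
    · exact hpos _ h4 (by omega)
  have hpc_nonneg : ∀ i, m ≤ i → 0 ≤ p.coeff i := by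
    intro i h1
    rcases le_or_gt i T.card with h2 | h2
    · exact (hpc_pos i h1 h2).le
    · rw [coeff_eq_zero_of_natDegree_lt (by omega)]
  -- P := derivative^[m] p is positive on [0, ∞)
  have hP : ∀ t : ℝ, 0 ≤ t → 0 < (derivative^[m] p).eval t := by
    intro t ht
    have hc : ∀ i : ℕ, 0 ≤ (derivative^[m] p).coeff i := by
      intro i
      rw [Polynomial.coeff_iterate_derivative]
      exact nsmul_nonneg (hpc_nonneg _ (by omega)) _
    have hc0 : 0 < (derivative^[m] p).coeff 0 := by
      rw [Polynomial.coeff_iterate_derivative]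
      have h5 : 0 < (0 + m).descFactorial m := by
        rw [Nat.pos_iff_ne_zero]
        intro h
        rw [Nat.descFactorial_eq_zero_iff_lt] at h
        omega
      have h6 : 0 < p.coeff (0 + m) := hpc_pos _ (by omega) (by omega)
      positivity
    rw [Polynomial.eval_eq_sum_range]
    calc (0:ℝ) < (derivative^[m] p).coeff 0 * t ^ 0 := by simpa using hc0
      _ ≤ _ := by
          apply Finset.single_le_sum (f := fun i => (derivative^[m] p).coeff i * t ^ i)
          · intro i _
            exact mul_nonneg (hc i) (pow_nonneg ht i)
          · exact Finset.mem_range.2 (by omega)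
  -- facts about iterated derivatives of q
  have hqit_split : ∀ s : ℕ, RSplit (derivative^[s] q) := fun s => rsplit_iterate hqsplit s
  have hqit_top : ∀ s : ℕ, s ≤ d → 0 < (derivative^[s] q).coeff (d - s) := by
    intro s hs
    rw [Polynomial.coeff_iterate_derivative, show d - s + s = d by omega]
    have h5 : 0 < d.descFactorial s := by
      rw [Nat.pos_iff_ne_zero]
      intro h
      rw [Nat.descFactorial_eq_zero_iff_lt] at h
      omega
    have h6 : q.coeff d = 1 := by
      have := (prodT_monic lam E).coeff_natDegree
      rwa [hqdeg] at this
    rw [h6]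
    simpa using h5
  have hqit_deg : ∀ s : ℕ, s ≤ d → (derivative^[s] q).natDegree = d - s := by
    intro s hs
    have h1 := natDegree_iterate_le q s
    rw [hqdeg] at h1
    have h2 := le_natDegree_of_ne_zero (ne_of_gt (hqit_top s hs))
    omega
  have hqit_lead : ∀ s : ℕ, s ≤ d → 0 < (derivative^[s] q).leadingCoeff := by
    intro s hs
    rw [Polynomial.leadingCoeff, hqit_deg s hs]
    exact hqit_top s hs
  -- all roots of Q := derivative^[m] q are negative
  have hQroots : ∀ r ∈ (derivative^[m] q).roots, r < 0 := by
    by_contra hcon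
    push_neg at hcon
    obtain ⟨r₀, hr₀, hr₀0⟩ := hcon
    have hfin : (derivative^[m] q).roots.toFinset.Nonempty :=
      ⟨r₀, Multiset.mem_toFinset.2 hr₀⟩
    set β := (derivative^[m] q).roots.toFinset.max' hfin with hβ
    have hβroot : β ∈ (derivative^[m] q).roots :=
      Multiset.mem_toFinset.1 ((derivative^[m] q).roots.toFinset.max'_mem hfin)
    have hβmax : ∀ r ∈ (derivative^[m] q).roots, r ≤ β := fun r hr =>
      Finset.le_max' _ r (Multiset.mem_toFinset.2 hr)
    have hβ0 : (0:ℝ) ≤ β := le_trans hr₀0 (hβmax _ hr₀)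
    have hQne : derivative^[m] q ≠ 0 := by
      intro h
      have := hqit_top m (by omega)
      rw [h] at this
      simp at this
    have hQβ : (derivative^[m] q).eval β = 0 := isRoot_of_mem_roots hβroot
    rcases Nat.eq_zero_or_pos m with hm0 | hmpos
    · -- m = 0 : p(β) = 0 contradicts hP
      have h1 := hP β hβ0
      rw [hm0] at hQβ h1
      simp only [Function.iterate_zero, id_eq] at hQβ h1
      rw [hpq, eval_mul, hQβ, mul_zero] at h1
      exact lt_irrefl _ h1
    · obtain ⟨s, rfl⟩ : ∃ s, m = s + 1 := ⟨m - 1, by omega⟩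
      set g := derivative^[s] q with hg
      have hsd : s ≤ d := by omega
      have hgdeg : g.natDegree = d - s := hqit_deg s hsd
      have hgsplit := hqit_split s
      have hglead := hqit_lead s hsd
      have hgQ : derivative g = derivative^[s + 1] q := (Function.iterate_succ_apply' _ _ _).symm
      have hgroots_ne : g.roots ≠ 0 := by
        intro h
        have := hgsplit
        unfold RSplit at this
        rw [h] at this
        simp [hgdeg] at this
        have := hqit_deg s hsd
        omega
      have hgfin : g.roots.toFinset.Nonempty := by
        rcases Multiset.exists_mem_of_ne_zero hgroots_ne with ⟨x, hx⟩
        exact ⟨x, Multiset.mem_toFinset.2 hx⟩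
      set R := g.roots.toFinset.max' hgfin with hR
      have hRroot : R ∈ g.roots := Multiset.mem_toFinset.1 (g.roots.toFinset.max'_mem hgfin)
      have hRmax : ∀ r ∈ g.roots, r ≤ R := fun r hr =>
        Finset.le_max' _ r (Multiset.mem_toFinset.2 hr)
      have hgR : g.eval R = 0 := isRoot_of_mem_roots hRroot
      have hβR : β ≤ R := by
        by_contra hc
        push_neg at hc
        have h1 : ∀ r ∈ g.roots, r < β := fun r hr => lt_of_le_of_lt (hRmax r hr) hc
        have h2 := (evals_of_split g hgsplit hglead β h1).2 hgroots_ne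
        rw [hgQ, hQβ] at h2
        exact lt_irrefl _ h2
      have hgβ : g.eval β ≤ 0 := by
        rcases eq_or_lt_of_le hβR with heq | hlt
        · rw [heq, hgR]
        · have hmono : StrictMonoOn (fun x => g.eval x) (Set.Icc β R) := by
            apply strictMonoOn_of_deriv_pos (convex_Icc β R) (Polynomial.continuousOn g)
            intro x hx
            rw [interior_Icc] at hx
            rw [Polynomial.deriv, hgQ]
            have h1 : ∀ r ∈ (derivative^[s+1] q).roots, r < x := fun r hr =>
              lt_of_le_of_lt (hβmax r hr) hx.1
            exact (evals_of_split _ (hqit_split (s+1)) (hqit_lead (s+1) (by omega)) x h1).1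
          have h9 := hmono (Set.left_mem_Icc.2 hβR) (Set.right_mem_Icc.2 hβR) hlt
          exact le_of_lt (by simpa [hgR] using h9)
      -- Leibniz identity at β
      have hid := iterate_deriv_linear_mul (lam a) q s
      have h1 := hP β hβ0
      rw [hpq, hid, eval_add, eval_mul, eval_mul, hQβ, mul_zero, zero_add, eval_C] at h1
      nlinarith [hgβ, Nat.cast_nonneg (α := ℝ) s]
  -- conclude : coefficients of Q are positive, pull back to q
  have hQdeg : (derivative^[m] q).natDegree = d - m := hqit_deg m (by omega)
  have hQcoeff : ∀ i, i ≤ d - m → 0 < (derivative^[m] q).coeff i := by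
    intro i hi
    apply coeff_pos_of_split_neg_roots _ (hqit_split m) (hqit_lead m (by omega)) hQroots
    omega
  have hidx : d - j - m + m = d - j := by omega
  have h1 := hQcoeff (d - j - m) (by omega)
  rw [Polynomial.coeff_iterate_derivative, hidx] at h1
  have h2 : 0 < q.coeff (d - j) := by
    rw [nsmul_eq_mul] at h1
    by_contra hc
    push_neg at hc
    have h4 : (((d - j).descFactorial m : ℕ) : ℝ) * q.coeff (d - j) ≤ 0 :=
      mul_nonpos_of_nonneg_of_nonpos (by positivity) hc
    linarith
  have h3 := coeff_prodT lam E j (by omega)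
  rw [hEcard] at h3
  rw [← h3]
  exact h2

private lemma card_filter_lt (n j : ℕ) (hjn : j ≤ n) :
    (Finset.univ.filter fun x : Fin n => (x : ℕ) < j).card = j := by
  have h : (Finset.univ.filter fun x : Fin n => (x : ℕ) < j)
      = (Finset.range j).attachFin (fun m hm => lt_of_lt_of_le (Finset.mem_range.1 hm) hjn) := by
    ext x
    simp [Finset.mem_attachFin]
  rw [h, Finset.card_attachFin, Finset.card_range]

private lemma card_filter_le (n j : ℕ) (hjn : j ≤ n) :
    (Finset.univ.filter fun x : Fin n => j ≤ (x : ℕ)).card = n - j := by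
  have h := Finset.card_filter_add_card_filter_not
    (s := (Finset.univ : Finset (Fin n))) (p := fun x : Fin n => (x : ℕ) < j)
  have h2 : (Finset.univ.filter fun x : Fin n => ¬ (x : ℕ) < j)
      = (Finset.univ.filter fun x : Fin n => j ≤ (x : ℕ)) := by
    apply Finset.filter_congr
    intro x _
    simp [not_lt]
  rw [h2, card_filter_lt n j hjn, Finset.card_univ, Fintype.card_fin] at h
  omega

private lemma erase_filter_le (n j : ℕ) (hjn : j < n) :
    (Finset.univ.filter fun x : Fin n => j ≤ (x : ℕ)).erase ⟨j, hjn⟩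
      = Finset.univ.filter fun x : Fin n => j + 1 ≤ (x : ℕ) := by
  ext x
  simp only [Finset.mem_erase, Finset.mem_filter, Finset.mem_univ, true_and, Ne,
    Fin.ext_iff]
  constructor
  · rintro ⟨h1, h2⟩; omega
  · intro h1; exact ⟨by omega, by omega⟩

private lemma POS (n k : ℕ) (lam : Fin n → ℝ) (hkn : k ≤ n)
    (hlam : ∀ m : ℕ, 1 ≤ m → m ≤ k → 0 < sigmaT lam Finset.univ m)
    (hsort : ∀ i j : Fin n, i ≤ j → lam j ≤ lam i) :
    ∀ j, j < k → ∀ i, i ≤ k - j →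
      0 < sigmaT lam (Finset.univ.filter fun x : Fin n => j ≤ (x : ℕ)) i := by
  intro j
  induction j with
  | zero =>
    intro _ i hi
    have huniv : (Finset.univ.filter fun x : Fin n => 0 ≤ (x : ℕ)) = Finset.univ := by
      simp
    rw [huniv]
    rcases Nat.eq_zero_or_pos i with rfl | hi1
    · rw [sigmaT_zero]; norm_num
    · exact hlam i hi1 (by omega)
  | succ t ih =>
    intro hjk i hi
    have htn : t < n := by omega
    have ha : (⟨t, htn⟩ : Fin n) ∈ Finset.univ.filter fun x : Fin n => t ≤ (x : ℕ) := by
      simp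
    have hcard : (Finset.univ.filter fun x : Fin n => t ≤ (x : ℕ)).card = n - t :=
      card_filter_le n t (by omega)
    have h := delete_max lam (Finset.univ.filter fun x : Fin n => t ≤ (x : ℕ)) ⟨t, htn⟩ ha
      (k - t) (by omega) (by omega) (fun j' hj1 hj2 => ih (by omega) j' hj2)
    rw [erase_filter_le n t htn] at h
    exact h i (by omega)

private lemma lam_pos (n k : ℕ) (lam : Fin n → ℝ) (hkn : k ≤ n)
    (hlam : ∀ m : ℕ, 1 ≤ m → m ≤ k → 0 < sigmaT lam Finset.univ m)
    (hsort : ∀ i j : Fin n, i ≤ j → lam j ≤ lam i) :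
    ∀ j : ℕ, ∀ hj : j < n, j < k → 0 < lam ⟨j, hj⟩ := by
  intro j hjn hjk
  have h1 := POS n k lam hkn hlam hsort j hjk 1 (by omega)
  by_contra hc
  push_neg at hc
  have h2 : sigmaT lam (Finset.univ.filter fun x : Fin n => j ≤ (x : ℕ)) 1 ≤ 0 := by
    unfold sigmaT
    rw [Finset.powersetCard_one, Finset.sum_map]
    apply Finset.sum_nonpos
    intro x hx
    simp only [Finset.mem_filter, Finset.mem_univ, true_and] at hx
    simp only [Function.Embedding.coeFn_mk, Finset.prod_singleton]
    exact le_trans (hsort ⟨j, hjn⟩ x (by rwa [Fin.le_def])) hc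
  linarith

private lemma sigmaT_erase {n : ℕ} (lam : Fin n → ℝ) (T : Finset (Fin n)) (a : Fin n)
    (ha : a ∈ T) (j : ℕ) (hj1 : 1 ≤ j) (hj2 : j < T.card) :
    sigmaT lam T j = sigmaT lam (T.erase a) j + lam a * sigmaT lam (T.erase a) (j - 1) := by
  have hEcard : (T.erase a).card = T.card - 1 := Finset.card_erase_of_mem ha
  have hpq : ∏ i ∈ T, (X + C (lam i)) = (X + C (lam a)) * ∏ i ∈ T.erase a, (X + C (lam i)) :=
    (Finset.mul_prod_erase T _ ha).symm
  have h1 := coeff_prodT lam T j (by omega)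
  obtain ⟨t, ht⟩ : ∃ t, T.card - j = t + 1 := ⟨T.card - j - 1, by omega⟩
  rw [ht] at h1
  rw [← h1, hpq, add_mul, coeff_add, coeff_X_mul, coeff_C_mul]
  have h2 := coeff_prodT lam (T.erase a) j (by omega)
  have h3 := coeff_prodT lam (T.erase a) (j - 1) (by omega)
  rw [hEcard, show T.card - 1 - j = t by omega] at h2
  rw [hEcard, show T.card - 1 - (j - 1) = t + 1 by omega] at h3
  rw [h2, h3]

private lemma filter_lt_succ (n j : ℕ) (hjn : j < n) :
    (Finset.univ.filter fun x : Fin n => (x : ℕ) < j + 1)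
      = insert ⟨j, hjn⟩ (Finset.univ.filter fun x : Fin n => (x : ℕ) < j) := by
  ext x
  simp only [Finset.mem_filter, Finset.mem_univ, true_and, Finset.mem_insert, Fin.ext_iff]
  omega

private lemma chain (n k l : ℕ) (hlk : l < k) (hkn : k ≤ n) (lam : Fin n → ℝ)
    (hlam : ∀ m : ℕ, 1 ≤ m → m ≤ k → 0 < sigmaT lam Finset.univ m)
    (hsort : ∀ i j : Fin n, i ≤ j → lam j ≤ lam i) :
    ∀ j, j ≤ l →
      (∏ i ∈ Finset.univ.filter (fun i : Fin n => (i : ℕ) < j), lam i) *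
        sigmaT lam (Finset.univ.filter fun x : Fin n => j ≤ (x : ℕ)) (k - 1 - j)
      ≤ sigmaT lam Finset.univ (k - 1) := by
  intro j
  induction j with
  | zero =>
    intro _
    have h1 : (Finset.univ.filter fun i : Fin n => (i : ℕ) < 0) = (∅ : Finset (Fin n)) := by
      simp
    have h2 : (Finset.univ.filter fun x : Fin n => 0 ≤ (x : ℕ)) = Finset.univ := by simp
    rw [h1, h2, Finset.prod_empty, one_mul, Nat.sub_zero]
  | succ t ih =>
    intro hjl
    have htn : t < n := by omega
    have hprod : ∀ i ∈ Finset.univ.filter (fun i : Fin n => (i : ℕ) < t), 0 < lam i := by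
      intro x hx
      simp only [Finset.mem_filter, Finset.mem_univ, true_and] at hx
      have := lam_pos n k lam hkn hlam hsort x.val x.isLt (by omega)
      simpa using this
    have hPj : 0 ≤ ∏ i ∈ Finset.univ.filter (fun i : Fin n => (i : ℕ) < t), lam i :=
      Finset.prod_nonneg fun i hi => (hprod i hi).le
    have hla : 0 < lam ⟨t, htn⟩ := lam_pos n k lam hkn hlam hsort t htn (by omega)
    have ha : (⟨t, htn⟩ : Fin n) ∈ Finset.univ.filter fun x : Fin n => t ≤ (x : ℕ) := by simp
    have hcard : (Finset.univ.filter fun x : Fin n => t ≤ (x : ℕ)).card = n - t :=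
      card_filter_le n t (by omega)
    have hrec := sigmaT_erase lam (Finset.univ.filter fun x : Fin n => t ≤ (x : ℕ)) ⟨t, htn⟩
      ha (k - 1 - t) (by omega) (by omega)
    rw [erase_filter_le n t htn] at hrec
    have hnonneg : 0 ≤ sigmaT lam (Finset.univ.filter fun x : Fin n => t + 1 ≤ (x : ℕ))
        (k - 1 - t) := by
      have := POS n k lam hkn hlam hsort (t + 1) (by omega) (k - 1 - t) (by omega)
      exact this.le
    have hstep : (∏ i ∈ Finset.univ.filter (fun i : Fin n => (i : ℕ) < t + 1), lam i) *
        sigmaT lam (Finset.univ.filter fun x : Fin n => t + 1 ≤ (x : ℕ)) (k - 1 - (t + 1))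
        ≤ (∏ i ∈ Finset.univ.filter (fun i : Fin n => (i : ℕ) < t), lam i) *
          sigmaT lam (Finset.univ.filter fun x : Fin n => t ≤ (x : ℕ)) (k - 1 - t) := by
      rw [filter_lt_succ n t htn, Finset.prod_insert (by simp)]
      rw [show k - 1 - (t + 1) = k - 1 - t - 1 by omega, hrec]
      have hh : lam ⟨t, htn⟩ * sigmaT lam
          (Finset.univ.filter fun x : Fin n => t + 1 ≤ (x : ℕ)) (k - 1 - t - 1)
          ≤ sigmaT lam (Finset.univ.filter fun x : Fin n => t + 1 ≤ (x : ℕ)) (k - 1 - t)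
            + lam ⟨t, htn⟩ * sigmaT lam
              (Finset.univ.filter fun x : Fin n => t + 1 ≤ (x : ℕ)) (k - 1 - t - 1) := by
        linarith
      calc lam ⟨t, htn⟩ * (∏ i ∈ Finset.univ.filter (fun i : Fin n => (i : ℕ) < t), lam i) *
            sigmaT lam (Finset.univ.filter fun x : Fin n => t + 1 ≤ (x : ℕ)) (k - 1 - t - 1)
          = (∏ i ∈ Finset.univ.filter (fun i : Fin n => (i : ℕ) < t), lam i) *
            (lam ⟨t, htn⟩ * sigmaT lam
              (Finset.univ.filter fun x : Fin n => t + 1 ≤ (x : ℕ)) (k - 1 - t - 1)) := by ring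
        _ ≤ (∏ i ∈ Finset.univ.filter (fun i : Fin n => (i : ℕ) < t), lam i) *
            (sigmaT lam (Finset.univ.filter fun x : Fin n => t + 1 ≤ (x : ℕ)) (k - 1 - t)
              + lam ⟨t, htn⟩ * sigmaT lam
                (Finset.univ.filter fun x : Fin n => t + 1 ≤ (x : ℕ)) (k - 1 - t - 1)) :=
            mul_le_mul_of_nonneg_left hh hPj
    exact le_trans hstep (ih (by omega))

/-- A step in display (2.13): if 0 ≤ l < k ≤ n and λ ∈ Γ_k with λ₁ ≥ ⋯ ≥ λₙ, then
λ₁, …, λ_l are positive and σ_{k−1}(λ) ≥ λ₁⋯λ_l · σ_{k−l−1}(λ|1,…,l). -/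
theorem esymm_ge_prod_mul_esymmDelSet (n k l : ℕ) (hlk : l < k) (hkn : k ≤ n)
    (lam : Fin n → ℝ) (hlam : lam ∈ GardingCone n k)
    (hsort : ∀ i j : Fin n, i ≤ j → lam j ≤ lam i) :
    (∀ i : Fin n, (i : ℕ) < l → 0 < lam i) ∧
    esymm lam ((k : ℤ) - 1)
      ≥ (∏ i ∈ Finset.univ.filter (fun i : Fin n => (i : ℕ) < l), lam i) *
        esymmDelSet lam (Finset.univ.filter (fun i : Fin n => (i : ℕ) < l))
          ((k : ℤ) - (l : ℤ) - 1) := by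

  have hlam' : ∀ m : ℕ, 1 ≤ m → m ≤ k → 0 < sigmaT lam Finset.univ m := by
    intro m h1 h2
    have h3 := hlam m h1 h2
    unfold esymm at h3
    rw [if_neg (show ¬((m:ℤ) < 0) by omega), Int.toNat_natCast] at h3
    simpa [sigmaT] using h3
  constructor
  · intro i hi
    have := lam_pos n k lam hkn hlam' hsort i.val i.isLt (by omega)
    simpa using this
  · have hch := chain n k l hlk hkn lam hlam' hsort l le_rfl
    rw [ge_iff_le]
    have e1 : esymm lam ((k:ℤ) - 1) = sigmaT lam Finset.univ (k - 1) := by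
      unfold esymm sigmaT
      rw [if_neg (show ¬(((k:ℤ) - 1) < 0) by omega),
        show ((k:ℤ) - 1).toNat = k - 1 by omega]
    have hset : (Finset.univ \ Finset.univ.filter fun i : Fin n => (i:ℕ) < l)
        = Finset.univ.filter fun x : Fin n => l ≤ (x:ℕ) := by
      rw [← Finset.filter_not]
      apply Finset.filter_congr
      intro x _
      simp [not_lt]
    have e2 : esymmDelSet lam (Finset.univ.filter fun i : Fin n => (i:ℕ) < l)
        ((k:ℤ) - (l:ℤ) - 1)
        = sigmaT lam (Finset.univ.filter fun x : Fin n => l ≤ (x:ℕ)) (k - 1 - l) := by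
      unfold esymmDelSet sigmaT
      rw [if_neg (show ¬(((k:ℤ) - (l:ℤ) - 1) < 0) by omega),
        show ((k:ℤ) - (l:ℤ) - 1).toNat = k - 1 - l by omega, hset]
    rw [e1, e2]
    exact hch
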